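/- Suppose λ, μ ∈ ℝ* with λμ < 0 and log|λ| / log|μ| irrational, and let Λ be a multiplicative subgroup of ℝ* containing λ and μ. Then Λ is dense in ℝ. -/

import Mathlib

private lemma aux_zpow_exp {q : ℝ} (hq : 0 < q) (m : ℤ) :
    q ^ m = Real.exp ((m : ℝ) * Real.log q) := by
  rw [← Real.rpow_intCast, Real.rpow_def_of_pos hq, mul_comm]

private lemma aux_dense (Λ : Subgroup ℝˣ) (p n : ℝˣ) (hp : p ∈ Λ) (hn : n ∈ Λ)
    (hp0 : 0 < (p : ℝ)) (hn0 : (n : ℝ) < 0)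
    (hirr : Irrational (Real.log (p : ℝ) / Real.log |(n : ℝ)|)) :
    Dense {x : ℝ | ∃ u ∈ Λ, (u : ℝ) = x} := by
  set S : Set ℝ := {x : ℝ | ∃ u ∈ Λ, (u : ℝ) = x} with hS
  set a : ℝ := Real.log (p : ℝ) with ha
  set b : ℝ := Real.log |(n : ℝ)| with hb
  have hb0 : b ≠ 0 := by
    intro h
    rw [h, div_zero] at hirr
    exact hirr ⟨0, by norm_num⟩
  have hbn : b = Real.log (n : ℝ) := by rw [hb, Real.log_abs]
  -- the additive subgroup generated by a and 2b is dense
  set A : AddSubgroup ℝ := AddSubgroup.closure {a, 2 * b} with hA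
  have hAdense : Dense (A : Set ℝ) := by
    rcases A.dense_or_cyclic with h | ⟨g, hg⟩
    · exact h
    · exfalso
      have haA : a ∈ A := AddSubgroup.subset_closure (by simp)
      have hbA : 2 * b ∈ A := AddSubgroup.subset_closure (by simp)
      rw [hg, AddSubgroup.mem_closure_singleton] at haA hbA
      obtain ⟨m, hm⟩ := haA
      obtain ⟨k, hk⟩ := hbA
      simp only [zsmul_eq_mul] at hm hk
      have hg0 : g ≠ 0 := by
        rintro rfl
        simp at hk
        exact hb0 hk
      have hk0 : (k : ℝ) ≠ 0 := by
        intro h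
        rw [h, zero_mul] at hk
        exact hb0 (by linarith)
      refine hirr ⟨(2 * m) / k, ?_⟩
      push_cast
      rw [← hm, show b = (k : ℝ) * g / 2 by linarith]
      field_simp
  -- positive elements of S
  have hpos : ∀ c ∈ A, Real.exp c ∈ S := by
    intro c hc
    rw [hA, AddSubgroup.mem_closure_pair] at hc
    obtain ⟨m, k, hmk⟩ := hc
    refine ⟨p ^ m * (n * n) ^ k, mul_mem (zpow_mem hp m) (zpow_mem (mul_mem hn hn) k), ?_⟩
    push_cast
    have hnn : (0 : ℝ) < (n : ℝ) * (n : ℝ) := mul_pos_of_neg_of_neg hn0 hn0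
    rw [aux_zpow_exp hp0, aux_zpow_exp hnn, ← Real.exp_add, ← hmk]
    congr 1
    have : Real.log ((n : ℝ) * (n : ℝ)) = 2 * b := by
      rw [hbn, Real.log_mul (ne_of_lt hn0) (ne_of_lt hn0)]; ring
    rw [this]
    simp only [zsmul_eq_mul, ha]
  -- negative elements of S
  have hneg' : ∀ c ∈ A, (n : ℝ) * Real.exp c ∈ S := by
    intro c hc
    obtain ⟨u, hu, huc⟩ := hpos c hc
    exact ⟨n * u, mul_mem hn hu, by push_cast; rw [huc]⟩
  -- now prove density
  rw [dense_iff_closure_eq]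
  apply Set.eq_univ_of_forall
  intro x
  have hIoi : ∀ y : ℝ, 0 < y → y ∈ closure S := by
    intro y hy
    have h1 : Real.exp '' (A : Set ℝ) ⊆ S := by
      rintro _ ⟨c, hc, rfl⟩; exact hpos c hc
    have h2 : Real.exp '' closure (A : Set ℝ) ⊆ closure S :=
      (image_closure_subset_closure_image Real.continuous_exp).trans (closure_mono h1)
    have : y ∈ Real.exp '' closure (A : Set ℝ) := by
      rw [hAdense.closure_eq]
      exact ⟨Real.log y, trivial, Real.exp_log hy⟩
    exact h2 this
  rcases lt_trichotomy x 0 with hx | hx | hx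
  · have h1 : (fun c => (n : ℝ) * Real.exp c) '' (A : Set ℝ) ⊆ S := by
      rintro _ ⟨c, hc, rfl⟩; exact hneg' c hc
    have h2 : (fun c => (n : ℝ) * Real.exp c) '' closure (A : Set ℝ) ⊆ closure S :=
      (image_closure_subset_closure_image (by continuity)).trans (closure_mono h1)
    have hxn : 0 < x / (n : ℝ) := div_pos_of_neg_of_neg hx hn0
    have : x ∈ (fun c => (n : ℝ) * Real.exp c) '' closure (A : Set ℝ) := by
      rw [hAdense.closure_eq]
      refine ⟨Real.log (x / (n : ℝ)), trivial, ?_⟩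
      show (n : ℝ) * Real.exp (Real.log (x / (n : ℝ))) = x
      rw [Real.exp_log hxn]
      field_simp
    exact h2 this
  · have : Set.Ioi (0 : ℝ) ⊆ closure S := fun y hy => hIoi y hy
    have h0 : closure (Set.Ioi (0 : ℝ)) ⊆ closure S := closure_minimal this isClosed_closure
    rw [closure_Ioi] at h0
    exact hx ▸ h0 (Set.self_mem_Ici)
  · exact hIoi x hx

theorem stmt_11 (Λ : Subgroup ℝˣ) (l μ : ℝˣ) (hl : l ∈ Λ) (hμ : μ ∈ Λ)
    (hneg : (l : ℝ) * (μ : ℝ) < 0)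
    (hl1 : |(l : ℝ)| ≠ 1) (hμ1 : |(μ : ℝ)| ≠ 1)
    (hirr : Irrational (Real.log |(l : ℝ)| / Real.log |(μ : ℝ)|)) :
    Dense {x : ℝ | ∃ u ∈ Λ, (u : ℝ) = x} := by
  rcases mul_neg_iff.mp hneg with ⟨hl0, hμ0⟩ | ⟨hl0, hμ0⟩
  · -- l > 0, μ < 0
    refine aux_dense Λ l μ hl hμ hl0 hμ0 ?_
    rwa [abs_of_pos hl0] at hirr
  · -- l < 0, μ > 0
    refine aux_dense Λ μ l hμ hl hμ0 hl0 ?_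
    have := hirr.inv
    rw [inv_div] at this
    rwa [abs_of_pos hμ0] at this
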